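/- Let φ_∞ ≥ 0, β > 0, C ≥ 0, and φ : [0,∞) → [0,φ_∞] nondecreasing and absolutely continuous with φ(0)=0. Suppose y : [0,∞) → [0,∞) is absolutely continuous and satisfies y'(t) + β y(t) ≤ C φ'(t) y(t) + C(φ'(t) + 1) for a.e. t. Then y(t) ≤ y(0) e^{C φ_∞} + C e^{C φ_∞} (1/β + φ_∞) for all t ≥ 0. -/

import Mathlib

open MeasureTheory Set

/-- Gronwall-type inequality with `L¹`-in-time coefficient: if
`y' + β y ≤ C φ' y + C (φ' + 1)` a.e., with `φ` nondecreasing,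
`0 ≤ φ ≤ φ∞` and `φ(0) = 0`, then
`y(t) ≤ y(0) e^{C φ∞} + C e^{C φ∞} (1/β + φ∞)` for all `t ≥ 0`. -/
theorem stmt14 (β C φinf : ℝ) (hβ : 0 < β) (hC : 0 ≤ C) (hφinf : 0 ≤ φinf)
    (y y' φ φ' : ℝ → ℝ)
    (hy : ∀ t, 0 ≤ t → 0 ≤ y t)
    (hφ0 : φ 0 = 0)
    (hφbd : ∀ t, 0 ≤ t → φ t ∈ Set.Icc 0 φinf)
    (hφmono : MonotoneOn φ (Set.Ici 0))
    (hφd : ∀ t, 0 ≤ t → HasDerivAt φ (φ' t) t)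
    (hyd : ∀ t, 0 ≤ t → HasDerivAt y (y' t) t)
    (hineq : ∀ᵐ t ∂(volume.restrict (Set.Ioi (0:ℝ))),
      y' t + β * y t ≤ C * φ' t * y t + C * (φ' t + 1)) :
    ∀ t, 0 ≤ t → y t ≤ y 0 * Real.exp (C * φinf) +
      C * Real.exp (C * φinf) * (1 / β + φinf) := by
  -- derivative of φ is nonnegative on (0,∞)
  have hφ'nonneg : ∀ s : ℝ, 0 < s → 0 ≤ φ' s := by
    intro s hs
    have htend : Filter.Tendsto (slope φ s) (nhdsWithin s (Set.Ioi s)) (nhds (φ' s)) :=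
      ((hasDerivAt_iff_tendsto_slope.1 (hφd s hs.le)).mono_left
        (nhdsWithin_mono s (fun x hx => ne_of_gt hx)))
    refine ge_of_tendsto htend ?_
    filter_upwards [self_mem_nhdsWithin] with x hx
    have hxs : s < x := hx
    have hm : φ s ≤ φ x := hφmono hs.le (le_of_lt (hs.trans hxs)) hxs.le
    have hd : 0 < x - s := by linarith
    rw [slope_def_field, div_eq_mul_inv]
    have : (0:ℝ) ≤ (φ x - φ s) * (x - s)⁻¹ :=
      mul_nonneg (by linarith) (inv_nonneg.2 hd.le)
    linarith
  -- the comparison function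
  set v : ℝ → ℝ := fun s => y s * Real.exp (β * s - C * φ s) -
      (y 0 + C / β + C * φ s) * Real.exp (β * s) with hv_def
  set V : ℝ → ℝ := fun s => (y' s + (β - C * φ' s) * y s) * Real.exp (β * s - C * φ s) -
      (C * φ' s * Real.exp (β * s) + (y 0 + C / β + C * φ s) * (β * Real.exp (β * s))) with hV_def
  have hvd : ∀ s : ℝ, 0 ≤ s → HasDerivAt v (V s) s := by
    intro s hs
    have h1 : HasDerivAt (fun u => β * u - C * φ u) (β - C * φ' s) s := by
      exact (((hasDerivAt_id s).const_mul β).sub ((hφd s hs).const_mul C)).congr_deriv (by ring)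
    have hE1 : HasDerivAt (fun u => Real.exp (β * u - C * φ u))
        (Real.exp (β * s - C * φ s) * (β - C * φ' s)) s := (Real.hasDerivAt_exp _).comp s h1
    have hE2 : HasDerivAt (fun u => Real.exp (β * u)) (β * Real.exp (β * s)) s := by
      exact ((Real.hasDerivAt_exp _).comp s ((hasDerivAt_id s).const_mul β)).congr_deriv
        (by simp only [id_eq, mul_one]; ring)
    have hP : HasDerivAt (fun u => y 0 + C / β + C * φ u) (C * φ' s) s := by
      simpa using (((hφd s hs).const_mul C).const_add (y 0 + C / β))
    have := ((hyd s hs).mul hE1).sub (hP.mul hE2)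
    refine this.congr_deriv ?_
    simp only [hV_def]; ring
  have hy0 : 0 ≤ y 0 := hy 0 le_rfl
  -- a.e. nonpositivity of the derivative
  have hV0 : ∀ᵐ s ∂volume, s ∈ Set.Ioi (0:ℝ) → V s ≤ 0 := by
    rw [← ae_restrict_iff' measurableSet_Ioi]
    filter_upwards [hineq, ae_restrict_mem measurableSet_Ioi] with s hsineq hs
    have hs0 : (0:ℝ) < s := hs
    have hφ'0 : 0 ≤ φ' s := hφ'nonneg s hs0
    have hφs : 0 ≤ φ s := (hφbd s hs0.le).1
    have hys : 0 ≤ y s := hy s hs0.le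
    have hE1E2 : Real.exp (β * s - C * φ s) ≤ Real.exp (β * s) := by
      apply Real.exp_le_exp.2; nlinarith
    have hE1pos : 0 < Real.exp (β * s - C * φ s) := Real.exp_pos _
    have hE2pos : 0 < Real.exp (β * s) := Real.exp_pos _
    have key : y' s + (β - C * φ' s) * y s ≤ C * φ' s + C := by nlinarith
    have hCnn : 0 ≤ C * φ' s + C := by positivity
    have h1 : (y' s + (β - C * φ' s) * y s) * Real.exp (β * s - C * φ s) ≤
        (C * φ' s + C) * Real.exp (β * s) := by
      calc (y' s + (β - C * φ' s) * y s) * Real.exp (β * s - C * φ s)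
          ≤ (C * φ' s + C) * Real.exp (β * s - C * φ s) :=
            mul_le_mul_of_nonneg_right key hE1pos.le
        _ ≤ (C * φ' s + C) * Real.exp (β * s) := mul_le_mul_of_nonneg_left hE1E2 hCnn
    have hβC : (y 0 + C / β + C * φ s) * β = β * y 0 + C + β * (C * φ s) := by
      field_simp
    simp only [hV_def]
    nlinarith [mul_nonneg (mul_nonneg hβ.le hy0) hE2pos.le,
      mul_nonneg (mul_nonneg hβ.le (mul_nonneg hC hφs)) hE2pos.le]
  -- main monotonicity step via FTC
  intro t ht
  have hmono : v t ≤ v 0 := by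
    have hG : IntegrableOn (fun s => max 0 (deriv v s)) (Set.Icc 0 t) := by
      apply (integrable_zero _ _ _).congr
      rw [Filter.EventuallyEq, ae_restrict_iff' measurableSet_Icc]
      have hne : ∀ᵐ s : ℝ ∂volume, s ≠ 0 := by
        have hset : {s : ℝ | ¬ s ≠ 0} = {0} := by ext s; simp
        rw [ae_iff, hset]
        exact Real.volume_singleton
      filter_upwards [hV0, hne] with s hs hs0 hsIcc
      have h0 : 0 < s := lt_of_le_of_ne hsIcc.1 (Ne.symm hs0)
      have hdv : deriv v s = V s := (hvd s h0.le).deriv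
      rw [hdv, max_eq_left (hs h0), Pi.zero_apply]
    have hcont : ContinuousOn v (Set.Icc 0 t) := fun s hs =>
      (hvd s hs.1).continuousAt.continuousWithinAt
    have hderiv : ∀ x ∈ Set.Ioo (0:ℝ) t, HasDerivWithinAt v (deriv v x) (Set.Ioi x) x := by
      intro x hx
      rw [(hvd x hx.1.le).deriv]
      exact (hvd x hx.1.le).hasDerivWithinAt
    have key := intervalIntegral.sub_le_integral_of_hasDeriv_right_of_le ht hcont hderiv hG
      (fun x _ => le_max_right 0 (deriv v x))
    have hzero : (∫ s in (0:ℝ)..t, max 0 (deriv v s)) = ∫ s in (0:ℝ)..t, (0:ℝ) := by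
      apply intervalIntegral.integral_congr_ae
      filter_upwards [hV0] with s hs hsI
      rw [Set.uIoc_of_le ht] at hsI
      have h0 : 0 < s := hsI.1
      rw [(hvd s h0.le).deriv, max_eq_left (hs h0)]
    rw [hzero, intervalIntegral.integral_zero] at key
    linarith
  -- unfold and conclude
  have hv0 : v 0 = -(C / β) := by
    simp [hv_def, hφ0]
  rw [hv0] at hmono
  have hCβ : 0 ≤ C / β := div_nonneg hC hβ.le
  have hE1pos : 0 < Real.exp (β * t - C * φ t) := Real.exp_pos _
  have hφt0 : 0 ≤ φ t := (hφbd t ht).1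
  have hφtinf : φ t ≤ φinf := (hφbd t ht).2
  have step1 : y t * Real.exp (β * t - C * φ t) ≤
      (y 0 + C / β + C * φ t) * Real.exp (β * t) := by
    simp only [hv_def] at hmono
    linarith
  have step2 : y t ≤ (y 0 + C / β + C * φ t) * Real.exp (C * φ t) := by
    have hq : (y 0 + C / β + C * φ t) * Real.exp (β * t) =
        ((y 0 + C / β + C * φ t) * Real.exp (C * φ t)) * Real.exp (β * t - C * φ t) := by
      rw [mul_assoc, ← Real.exp_add]; ring_nf
    rw [hq] at step1
    exact le_of_mul_le_mul_right step1 hE1pos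
  have step3 : (y 0 + C / β + C * φ t) * Real.exp (C * φ t) ≤
      (y 0 + C / β + C * φinf) * Real.exp (C * φinf) := by
    apply mul_le_mul
    · nlinarith
    · exact Real.exp_le_exp.2 (by nlinarith)
    · positivity
    · positivity
  have : (y 0 + C / β + C * φinf) * Real.exp (C * φinf) =
      y 0 * Real.exp (C * φinf) + C * Real.exp (C * φinf) * (1 / β + φinf) := by
    field_simp; ring
  linarith [step2, step3, this.le, this.ge]
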